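/- Let G be a locally compact second countable group equipped with a proper left-invariant compatible metric d. Then the following are equivalent: (1) the metric space (G,d) has property A; (2) every uniformly locally finite metric lattice (Z,d) in G has property A (as a metric space with the restricted metric); (3) there exists a uniformly locally finite metric lattice (Z,d) in G having property A. -/

import Mathlib

open MeasureTheory Metric Bornology Filter Topology
open scoped ENNReal BoundedContinuousFunction

noncomputable section

/-- A kernel of positive type: all quadratic combinations are real and nonnegative. -/
def IsPositiveTypeKernel {X : Type*} (k : X → X → ℂ) : Prop :=
  ∀ (n : ℕ) (x : Fin n → X) (c : Fin n → ℂ),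
    ∃ r : ℝ, 0 ≤ r ∧
      ∑ i : Fin n, ∑ j : Fin n, c i * (starRingEnd ℂ) (c j) * k (x i) (x j) = (r : ℂ)

/-- `d` is a proper left-invariant metric on the topological group `G` that induces
(is compatible with) its topology. -/
structure IsProperLeftInvariantCompatibleMetric (G : Type*) [Group G] [TopologicalSpace G]
    (d : G → G → ℝ) : Prop where
  refl : ∀ x, d x x = 0
  eq_of : ∀ {x y}, d x y = 0 → x = y
  symm : ∀ x y, d x y = d y x
  triangle : ∀ x y z, d x z ≤ d x y + d y z
  left_invariant : ∀ g x y, d (g * x) (g * y) = d x y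
  compatible : ∀ s : Set G, IsOpen s ↔ ∀ x ∈ s, ∃ ε > 0, ∀ y, d x y < ε → y ∈ s
  proper : ∀ (x : G) (r : ℝ), IsCompact {y : G | d x y ≤ r}

def PropertyAWith (G : Type*) [TopologicalSpace G] (d : G → G → ℝ) : Prop :=
  ∀ R > (0 : ℝ), ∀ ε > (0 : ℝ), ∃ S > (0 : ℝ), ∃ k : G → G → ℂ,
    Continuous (Function.uncurry k) ∧ IsPositiveTypeKernel k ∧
    (∀ x y, S < d x y → k x y = 0) ∧ ∀ x y, d x y ≤ R → ‖k x y - 1‖ < ε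

/-- `Z` is a metric lattice in `(G,d)`: uniformly discrete and coarsely dense. -/
def IsMetricLattice {G : Type*} (d : G → G → ℝ) (Z : Set G) : Prop :=
  (∃ δ > (0 : ℝ), ∀ z ∈ Z, ∀ w ∈ Z, z ≠ w → δ ≤ d z w) ∧
  ∃ R > (0 : ℝ), ∀ x : G, ∃ z ∈ Z, d z x ≤ R

/-- The subset `Z` is uniformly locally finite for the restricted metric. -/
def SubsetUniformlyLocallyFinite {G : Type*} (d : G → G → ℝ) (Z : Set G) : Prop :=
  ∀ S > (0 : ℝ), ∃ N : ℕ, ∀ z ∈ Z,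
    {x ∈ Z | d z x ≤ S}.Finite ∧ {x ∈ Z | d z x ≤ S}.ncard ≤ N

/-- (Yu's) property A of the subset `Z` with the restricted metric. -/
def SubsetPropertyA {G : Type*} [TopologicalSpace G] (d : G → G → ℝ) (Z : Set G) : Prop :=
  ∀ R > (0 : ℝ), ∀ ε > (0 : ℝ), ∃ S > (0 : ℝ), ∃ k : Z → Z → ℂ,
    Continuous (Function.uncurry k) ∧ IsPositiveTypeKernel k ∧
    (∀ x y : Z, S < d x y → k x y = 0) ∧ ∀ x y : Z, d x y ≤ R → ‖k x y - 1‖ < ε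

section Aux

variable {G : Type*} [Group G] [TopologicalSpace G] {d : G → G → ℝ}

private lemma abs_d_diff (hd : IsProperLeftInvariantCompatibleMetric G d) (z x y : G) :
    |d z y - d z x| ≤ d x y := by
  rw [abs_sub_le_iff]
  constructor
  · have h1 := hd.triangle z x y
    linarith
  · have h1 := hd.triangle z y x
    have h2 := hd.symm x y
    linarith

private lemma continuous_d (hd : IsProperLeftInvariantCompatibleMetric G d) (z : G) :
    Continuous (fun x => d z x) := by
  rw [continuous_def]
  intro s hs
  rw [hd.compatible]
  intro x hx
  obtain ⟨ε, hε, hball⟩ := Metric.isOpen_iff.1 hs _ hx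
  refine ⟨ε, hε, fun y hy => hball ?_⟩
  rw [Metric.mem_ball, Real.dist_eq]
  exact lt_of_le_of_lt (abs_d_diff hd z x y) hy

private lemma isOpen_dball (hd : IsProperLeftInvariantCompatibleMetric G d) (x : G) (r : ℝ) :
    IsOpen {y | d x y < r} := by
  rw [hd.compatible]
  intro y hy
  simp only [Set.mem_setOf_eq] at hy
  refine ⟨r - d x y, by linarith, fun w hw => ?_⟩
  simp only [Set.mem_setOf_eq]
  have := hd.triangle x y w
  linarith

private lemma dball_mem_nhds (hd : IsProperLeftInvariantCompatibleMetric G d) (x : G) {r : ℝ}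
    (hr : 0 < r) : {y | d x y < r} ∈ nhds x :=
  (isOpen_dball hd x r).mem_nhds (by simp [Set.mem_setOf_eq, hd.refl x, hr])

/-- Restriction of property A to any subset. -/
private lemma subsetA_of_A (hA : PropertyAWith G d) (Z : Set G) : SubsetPropertyA d Z := by
  intro R hR ε hε
  obtain ⟨S, hS, k, hc, hpos, hsupp, hnear⟩ := hA R hR ε hε
  refine ⟨S, hS, fun z w => k z w, ?_, ?_, ?_, ?_⟩
  · have : (Function.uncurry fun (z w : Z) => k (z : G) w)
        = (Function.uncurry k) ∘ (fun p : Z × Z => ((p.1 : G), (p.2 : G))) := rfl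
    rw [this]
    exact hc.comp (by fun_prop)
  · intro n x c
    exact hpos n (fun i => (x i : G)) c
  · intro x y h
    exact hsupp x y h
  · intro x y h
    exact hnear x y h

/-- Existence of a uniformly locally finite metric lattice. -/
private lemma exists_good_lattice (hd : IsProperLeftInvariantCompatibleMetric G d) :
    ∃ Z : Set G, IsMetricLattice d Z ∧ SubsetUniformlyLocallyFinite d Z := by
  have hzorn : ∀ c ⊆ {T : Set G | ∀ z ∈ T, ∀ w ∈ T, z ≠ w → (1 : ℝ) ≤ d z w},
      IsChain (· ⊆ ·) c → ∃ ub ∈ {T : Set G | ∀ z ∈ T, ∀ w ∈ T, z ≠ w → (1 : ℝ) ≤ d z w},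
        ∀ s ∈ c, s ⊆ ub := by
    intro c hc hchain
    refine ⟨⋃₀ c, ?_, fun s hs => Set.subset_sUnion_of_mem hs⟩
    rintro z ⟨s, hs, hzs⟩ w ⟨t, ht, hwt⟩ hzw
    rcases hchain.total hs ht with h | h
    · exact hc ht z (h hzs) w hwt hzw
    · exact hc hs z hzs w (h hwt) hzw
  obtain ⟨M, hM⟩ := zorn_subset {T : Set G | ∀ z ∈ T, ∀ w ∈ T, z ≠ w → (1 : ℝ) ≤ d z w} hzorn
  have hsep : ∀ z ∈ M, ∀ w ∈ M, z ≠ w → (1 : ℝ) ≤ d z w := hM.1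
  have hcov : ∀ x : G, ∃ z ∈ M, d z x ≤ 1 := by
    intro x
    by_contra hno
    push_neg at hno
    have hxM : x ∉ M := by
      intro hx
      have := hno x hx
      rw [hd.refl] at this
      linarith
    have hins : insert x M ∈ {T : Set G | ∀ z ∈ T, ∀ w ∈ T, z ≠ w → (1 : ℝ) ≤ d z w} := by
      rintro z (rfl | hz) w (rfl | hw) hzw
      · exact absurd rfl hzw
      · have h1 := hno w hw
        have h2 := hd.symm w z
        linarith
      · have := hno z hz
        linarith
      · exact hsep z hz w hw hzw
    have h2 := hM.2 hins (Set.subset_insert x M)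
    exact hxM (h2 (Set.mem_insert x M))
  refine ⟨M, ⟨⟨1, one_pos, hsep⟩, 1, one_pos, hcov⟩, ?_⟩
  intro S hS
  have hK : IsCompact {y : G | d 1 y ≤ S} := hd.proper 1 S
  obtain ⟨t, ht⟩ := hK.elim_finite_subcover (fun g : G => {y | d g y < 1/2})
    (fun g => isOpen_dball hd g _)
    (fun y _ => Set.mem_iUnion.2 ⟨y, by simp [Set.mem_setOf_eq, hd.refl y]⟩)
  refine ⟨t.card, fun z hz => ?_⟩
  set T : Set G := {x ∈ M | d z x ≤ S} with hT
  have hmap : ∀ x ∈ T, ∃ g ∈ t, d g (z⁻¹ * x) < 1/2 := by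
    intro x hx
    have hxK : z⁻¹ * x ∈ {y : G | d 1 y ≤ S} := by
      have heq : d 1 (z⁻¹ * x) = d z x := by
        have := hd.left_invariant z 1 (z⁻¹ * x)
        simpa [mul_inv_cancel_left] using this.symm
      simpa [Set.mem_setOf_eq, heq] using hx.2
    have := ht hxK
    simpa using Set.mem_iUnion₂.1 this
  classical
  choose f hf1 hf2 using hmap
  have hinj : Function.Injective (fun x : T => (⟨f x x.2, hf1 x x.2⟩ : {g // g ∈ t})) := by
    intro a b hab
    rw [Subtype.mk.injEq] at hab
    have h1 := hf2 (a : G) a.2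
    have h2 := hf2 (b : G) b.2
    rw [hab] at h1
    have hdab : d ((z : G)⁻¹ * a) (z⁻¹ * b) < 1 := by
      have h3 := hd.triangle (z⁻¹ * (a : G)) (f (b : G) b.2) (z⁻¹ * (b : G))
      have h4 := hd.symm (f (b : G) b.2) (z⁻¹ * (a : G))
      linarith
    rw [hd.left_invariant] at hdab
    by_contra hne
    have hne' : (a : G) ≠ b := fun h => hne (Subtype.ext h)
    have := hsep a a.2.1 b b.2.1 hne'
    linarith
  have : Finite {g // g ∈ t} := inferInstance
  have hfin : T.Finite := Set.finite_coe_iff.1 (Finite.of_injective _ hinj)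
  refine ⟨hfin, ?_⟩
  rw [← Nat.card_coe_set_eq]
  calc Nat.card T ≤ Nat.card {g // g ∈ t} := Nat.card_le_card_of_injective _ hinj
    _ = t.card := by rw [Nat.card_eq_fintype_card, Fintype.card_coe]

private lemma sum4_swap {ι κ μ ν M : Type*} [AddCommMonoid M]
    (A : Finset ι) (B : Finset κ) (C : Finset μ) (D : Finset ν) (f : ι → κ → μ → ν → M) :
    ∑ a ∈ A, ∑ b ∈ B, ∑ c ∈ C, ∑ e ∈ D, f a b c e
      = ∑ c ∈ C, ∑ e ∈ D, ∑ a ∈ A, ∑ b ∈ B, f a b c e := by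
  have h1 : ∀ a ∈ A, ∑ b ∈ B, ∑ c ∈ C, ∑ e ∈ D, f a b c e
      = ∑ c ∈ C, ∑ b ∈ B, ∑ e ∈ D, f a b c e := fun a _ => Finset.sum_comm
  rw [Finset.sum_congr rfl h1, Finset.sum_comm]
  refine Finset.sum_congr rfl fun c _ => ?_
  have h2 : ∀ a ∈ A, ∑ b ∈ B, ∑ e ∈ D, f a b c e
      = ∑ e ∈ D, ∑ b ∈ B, f a b c e := fun a _ => Finset.sum_comm
  rw [Finset.sum_congr rfl h2, Finset.sum_comm]

/-- Extension of property A from a lattice to the whole group. -/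
private lemma propertyA_of_lattice (hd : IsProperLeftInvariantCompatibleMetric G d)
    (Z : Set G) (hZl : IsMetricLattice d Z) (hulf : SubsetUniformlyLocallyFinite d Z)
    (hA : SubsetPropertyA d Z) : PropertyAWith G d := by
  classical
  obtain ⟨-, R₀, hR₀, hcov⟩ := hZl
  intro R hR ε hε
  obtain ⟨S', hS', k, -, hkpos, hksupp, hknear⟩ :=
    hA (R + 2 * (R₀ + 1)) (by positivity) (ε / 2) (by positivity)
  -- local finiteness of the lattice around arbitrary points
  have hfin : ∀ (x : G) (r : ℝ), {z : Z | d (z : G) x ≤ r}.Finite := by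
    intro x r
    obtain ⟨z₀, hz₀Z, hz₀⟩ := hcov x
    obtain ⟨N, hN⟩ := hulf (max (r + R₀) 1) (lt_of_lt_of_le one_pos (le_max_right _ _))
    have h1 : {w ∈ Z | d z₀ w ≤ max (r + R₀) 1}.Finite := (hN z₀ hz₀Z).1
    refine (h1.preimage (Set.injOn_of_injective Subtype.val_injective)).subset ?_
    intro z hz
    simp only [Set.mem_setOf_eq] at hz
    simp only [Set.mem_preimage, Set.mem_setOf_eq]
    refine ⟨z.2, ?_⟩
    have h3 := hd.triangle z₀ x (z : G)
    have h4 := hd.symm x (z : G)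
    have h5 : d z₀ (z : G) ≤ r + R₀ := by linarith
    exact h5.trans (le_max_left _ _)
  set F : G → ℝ → Finset Z := fun x r => (hfin x r).toFinset with hF
  have hFmem : ∀ (x : G) (r : ℝ) (z : Z), z ∈ F x r ↔ d (z : G) x ≤ r :=
    fun x r z => (hfin x r).mem_toFinset
  set ψ : Z → G → ℝ := fun z x => max (R₀ + 1 - d (z : G) x) 0 with hψ
  have hψ0 : ∀ (z : Z) (x : G), 0 ≤ ψ z x := fun z x => le_max_right _ _
  have hψvanish : ∀ (x : G) (z : Z), z ∉ F x (R₀ + 1) → ψ z x = 0 := by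
    intro x z hz
    rw [hFmem] at hz
    push_neg at hz
    rw [hψ]
    simp only
    rw [max_eq_right]
    linarith
  set Φ : G → ℝ := fun x => ∑' z : Z, ψ z x with hΦdef
  have hΦeq : ∀ (x : G) (s : Finset Z), F x (R₀ + 1) ⊆ s → Φ x = ∑ z ∈ s, ψ z x :=
    fun x s hs => tsum_eq_sum (fun z hz => hψvanish x z (fun h => hz (hs h)))
  have hΦ1 : ∀ x, 1 ≤ Φ x := by
    intro x
    obtain ⟨z₀, hz₀Z, hz₀⟩ := hcov x
    rw [hΦeq x _ (Finset.Subset.refl _)]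
    have hz₀F : (⟨z₀, hz₀Z⟩ : Z) ∈ F x (R₀ + 1) := (hFmem _ _ _).2 (by simpa using hz₀.trans (by linarith))
    have h1 : (1 : ℝ) ≤ ψ ⟨z₀, hz₀Z⟩ x := le_max_of_le_left (by simp only; linarith)
    exact h1.trans (Finset.single_le_sum (fun z _ => hψ0 z x) hz₀F)
  have hΦpos : ∀ x, 0 < Φ x := fun x => lt_of_lt_of_le one_pos (hΦ1 x)
  set φ : Z → G → ℝ := fun z x => ψ z x / Φ x with hφ
  have hφ0 : ∀ (z : Z) (x : G), 0 ≤ φ z x := fun z x => div_nonneg (hψ0 z x) (hΦpos x).le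
  have hφvanish : ∀ (x : G) (z : Z), z ∉ F x (R₀ + 1) → φ z x = 0 := by
    intro x z hz
    rw [hφ]
    simp only
    rw [hψvanish x z hz, zero_div]
  have hφsum : ∀ (x : G) (s : Finset Z), F x (R₀ + 1) ⊆ s → ∑ z ∈ s, φ z x = 1 := by
    intro x s hs
    rw [hφ]
    simp only
    rw [← Finset.sum_div, ← hΦeq x s hs, div_self (hΦpos x).ne']
  have hφmem : ∀ (x : G) (z : Z), φ z x ≠ 0 → d (z : G) x ≤ R₀ + 1 := by
    intro x z h
    by_contra hgt
    refine h (hφvanish x z (fun hmem => hgt ?_))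
    exact (hFmem _ _ _).1 hmem
  set k' : G → G → ℂ := fun x y => ∑' z : Z, ∑' w : Z, ((φ z x : ℂ) * (φ w y)) * k z w with hk'
  have hk'eq : ∀ (x y : G) (s t : Finset Z), F x (R₀ + 1) ⊆ s → F y (R₀ + 1) ⊆ t →
      k' x y = ∑ z ∈ s, ∑ w ∈ t, ((φ z x : ℂ) * (φ w y)) * k z w := by
    intro x y s t hsx hty
    rw [hk']
    simp only
    have hinner : ∀ z : Z, (∑' w : Z, ((φ z x : ℂ) * (φ w y)) * k z w)
        = ∑ w ∈ t, ((φ z x : ℂ) * (φ w y)) * k z w := by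
      intro z
      refine tsum_eq_sum (fun w hw => ?_)
      rw [hφvanish y w (fun h => hw (hty h))]
      simp
    rw [tsum_congr hinner]
    refine tsum_eq_sum (fun z hz => ?_)
    refine Finset.sum_eq_zero (fun w hw => ?_)
    rw [hφvanish x z (fun h => hz (hsx h))]
    simp
  have hFsub : ∀ x₀ x : G, d x₀ x < 1 → F x (R₀ + 1) ⊆ F x₀ (R₀ + 2) := by
    intro x₀ x hx z hz
    rw [hFmem] at hz ⊢
    have h1 := hd.triangle (z : G) x x₀
    have h2 := hd.symm x x₀
    linarith
  -- continuity
  have hψcont : ∀ z : Z, Continuous (ψ z) := by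
    intro z
    rw [hψ]
    exact (continuous_const.sub (continuous_d hd (z : G))).max continuous_const
  have hΦcont : Continuous Φ := by
    rw [continuous_iff_continuousAt]
    intro x₀
    have hnb : {y | d x₀ y < 1} ∈ nhds x₀ := dball_mem_nhds hd x₀ one_pos
    refine ContinuousAt.congr
      (f := fun y => ∑ z ∈ F x₀ (R₀ + 2), ψ z y) ?_ ?_
    · exact (continuous_finset_sum _ (fun z _ => hψcont z)).continuousAt
    · refine eventuallyEq_of_mem hnb (fun y hy => ?_)
      exact (hΦeq y _ (hFsub x₀ y hy)).symm
  have hφcont : ∀ z : Z, Continuous (φ z) := by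
    intro z
    rw [hφ]
    exact (hψcont z).div hΦcont (fun x => (hΦpos x).ne')
  have hk'cont : Continuous (Function.uncurry k') := by
    rw [continuous_iff_continuousAt]
    rintro ⟨x₀, y₀⟩
    have hnb : ({y | d x₀ y < 1} ×ˢ {y | d y₀ y < 1}) ∈ nhds (x₀, y₀) := by
      rw [nhds_prod_eq]
      exact Filter.prod_mem_prod (dball_mem_nhds hd x₀ one_pos) (dball_mem_nhds hd y₀ one_pos)
    refine ContinuousAt.congr
      (f := fun p : G × G => ∑ z ∈ F x₀ (R₀ + 2), ∑ w ∈ F y₀ (R₀ + 2),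
        ((φ z p.1 : ℂ) * (φ w p.2)) * k z w) ?_ ?_
    · refine (continuous_finset_sum _ (fun z _ => continuous_finset_sum _ (fun w _ => ?_))).continuousAt
      exact (((Complex.continuous_ofReal.comp ((hφcont z).comp continuous_fst)).mul
        (Complex.continuous_ofReal.comp ((hφcont w).comp continuous_snd))).mul continuous_const)
    · refine eventuallyEq_of_mem hnb ?_
      rintro ⟨x, y⟩ ⟨hx, hy⟩
      exact (hk'eq x y _ _ (hFsub x₀ x hx) (hFsub y₀ y hy)).symm
  -- positive type
  have hk'pos : IsPositiveTypeKernel k' := by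
    intro n x c
    set Fb : Finset Z := Finset.univ.biUnion (fun i : Fin n => F (x i) (R₀ + 1)) with hFb
    have hFbsub : ∀ i, F (x i) (R₀ + 1) ⊆ Fb := by
      intro i
      rw [hFb]
      exact Finset.subset_biUnion_of_mem (fun j : Fin n => F (x j) (R₀ + 1)) (Finset.mem_univ i)
    set a : Z → ℂ := fun z => ∑ i, c i * (φ z (x i) : ℂ) with ha
    have hstep : ∑ i, ∑ j, c i * (starRingEnd ℂ) (c j) * k' (x i) (x j)
        = ∑ z ∈ Fb, ∑ w ∈ Fb, a z * (starRingEnd ℂ) (a w) * k z w := by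
      have h1 : ∀ i j : Fin n, c i * (starRingEnd ℂ) (c j) * k' (x i) (x j)
          = ∑ z ∈ Fb, ∑ w ∈ Fb,
              (c i * (φ z (x i) : ℂ)) * ((starRingEnd ℂ) (c j) * (φ w (x j) : ℂ)) * k z w := by
        intro i j
        rw [hk'eq (x i) (x j) Fb Fb (hFbsub i) (hFbsub j), Finset.mul_sum]
        refine Finset.sum_congr rfl (fun z _ => ?_)
        rw [Finset.mul_sum]
        refine Finset.sum_congr rfl (fun w _ => ?_)
        ring
      have h2 : ∀ z w : Z, a z * (starRingEnd ℂ) (a w) * k z w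
          = ∑ i, ∑ j,
              (c i * (φ z (x i) : ℂ)) * ((starRingEnd ℂ) (c j) * (φ w (x j) : ℂ)) * k z w := by
        intro z w
        have hconj : (starRingEnd ℂ) (a w) = ∑ j, (starRingEnd ℂ) (c j) * (φ w (x j) : ℂ) := by
          rw [ha]
          simp only [map_sum, map_mul, Complex.conj_ofReal]
        rw [ha]
        simp only
        rw [hconj, Finset.sum_mul_sum, Finset.sum_mul]
        refine Finset.sum_congr rfl (fun i _ => ?_)
        rw [Finset.sum_mul]
      simp_rw [h1, h2]
      exact sum4_swap Finset.univ Finset.univ Fb Fb _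
    obtain ⟨r, hr0, hr⟩ := hkpos Fb.card (fun i => (Fb.equivFin.symm i : Z))
      (fun i => a (Fb.equivFin.symm i : Z))
    refine ⟨r, hr0, ?_⟩
    rw [hstep, ← hr]
    rw [← Finset.sum_coe_sort Fb (fun z => ∑ w ∈ Fb, a z * (starRingEnd ℂ) (a w) * k z w)]
    rw [← Equiv.sum_comp Fb.equivFin.symm
      (fun z : {v // v ∈ Fb} => ∑ w ∈ Fb, a (z : Z) * (starRingEnd ℂ) (a w) * k (z : Z) w)]
    refine Finset.sum_congr rfl (fun i _ => ?_)
    rw [← Finset.sum_coe_sort Fb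
      (fun w => a ((Fb.equivFin.symm i : {v // v ∈ Fb}) : Z) * (starRingEnd ℂ) (a w)
        * k ((Fb.equivFin.symm i : {v // v ∈ Fb}) : Z) w)]
    rw [← Equiv.sum_comp Fb.equivFin.symm]
  -- support
  have hk'supp : ∀ x y : G, S' + 2 * (R₀ + 1) < d x y → k' x y = 0 := by
    intro x y hxy
    rw [hk'eq x y _ _ (Finset.Subset.refl _) (Finset.Subset.refl _)]
    refine Finset.sum_eq_zero (fun z hz => Finset.sum_eq_zero (fun w hw => ?_))
    rw [hFmem] at hz hw
    have h4 := hd.triangle x (z : G) y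
    have h5 := hd.triangle (z : G) (w : G) y
    have h6 := hd.symm x (z : G)
    have h7 := hd.symm (w : G) y
    have h8 : S' < d (z : G) (w : G) := by linarith
    rw [hksupp z w h8, mul_zero]
  -- near 1
  have hk'near : ∀ x y : G, d x y ≤ R → ‖k' x y - 1‖ < ε := by
    intro x y hxy
    have hsx : ∑ z ∈ F x (R₀ + 1), ((φ z x : ℝ) : ℂ) = 1 := by
      rw [← Complex.ofReal_sum, hφsum x _ (Finset.Subset.refl _), Complex.ofReal_one]
    have hty : ∑ w ∈ F y (R₀ + 1), ((φ w y : ℝ) : ℂ) = 1 := by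
      rw [← Complex.ofReal_sum, hφsum y _ (Finset.Subset.refl _), Complex.ofReal_one]
    have h2 : k' x y - 1 = ∑ z ∈ F x (R₀ + 1), ∑ w ∈ F y (R₀ + 1),
        ((φ z x : ℂ) * (φ w y)) * (k z w - 1) := by
      have hone : (1 : ℂ) = ∑ z ∈ F x (R₀ + 1), ∑ w ∈ F y (R₀ + 1), (φ z x : ℂ) * (φ w y) := by
        rw [← Finset.sum_mul_sum, hsx, hty, one_mul]
      rw [hk'eq x y _ _ (Finset.Subset.refl _) (Finset.Subset.refl _)]
      conv_lhs => rw [hone]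
      rw [← Finset.sum_sub_distrib]
      refine Finset.sum_congr rfl (fun z _ => ?_)
      rw [← Finset.sum_sub_distrib]
      refine Finset.sum_congr rfl (fun w _ => ?_)
      ring
    rw [h2]
    have hb : ‖∑ z ∈ F x (R₀ + 1), ∑ w ∈ F y (R₀ + 1), ((φ z x : ℂ) * (φ w y)) * (k z w - 1)‖
        ≤ ∑ z ∈ F x (R₀ + 1), ∑ w ∈ F y (R₀ + 1), φ z x * φ w y * (ε / 2) := by
      refine (norm_sum_le _ _).trans (Finset.sum_le_sum (fun z _ => ?_))
      refine (norm_sum_le _ _).trans (Finset.sum_le_sum (fun w _ => ?_))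
      rw [norm_mul]
      have hnφ : ‖(φ z x : ℂ) * (φ w y : ℂ)‖ = φ z x * φ w y := by
        rw [← Complex.ofReal_mul, Complex.norm_real, Real.norm_eq_abs,
          abs_of_nonneg (mul_nonneg (hφ0 _ _) (hφ0 _ _))]
      rw [hnφ]
      rcases eq_or_ne (φ z x * φ w y) 0 with h0 | h0
      · rw [h0, zero_mul, zero_mul]
      · have hz0 : φ z x ≠ 0 := fun h => h0 (by rw [h, zero_mul])
        have hw0 : φ w y ≠ 0 := fun h => h0 (by rw [h, mul_zero])
        have hdz := hφmem x z hz0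
        have hdw := hφmem y w hw0
        have hdzw : d (z : G) (w : G) ≤ R + 2 * (R₀ + 1) := by
          have t1 := hd.triangle (z : G) x (w : G)
          have t2 := hd.triangle x y (w : G)
          have t3 := hd.symm y (w : G)
          linarith
        exact mul_le_mul_of_nonneg_left (hknear z w hdzw).le
          (mul_nonneg (hφ0 _ _) (hφ0 _ _))
    have hc : ∑ z ∈ F x (R₀ + 1), ∑ w ∈ F y (R₀ + 1), φ z x * φ w y * (ε / 2) = ε / 2 := by
      have hrow : ∀ z : Z, ∑ w ∈ F y (R₀ + 1), φ z x * φ w y * (ε / 2) = φ z x * (ε / 2) := by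
        intro z
        calc ∑ w ∈ F y (R₀ + 1), φ z x * φ w y * (ε / 2)
            = φ z x * ∑ w ∈ F y (R₀ + 1), φ w y * (ε / 2) := by
              rw [Finset.mul_sum]
              exact Finset.sum_congr rfl (fun w _ => by ring)
          _ = φ z x * (ε / 2) := by
              rw [← Finset.sum_mul, hφsum y _ (Finset.Subset.refl _), one_mul]
      rw [Finset.sum_congr rfl (fun z _ => hrow z), ← Finset.sum_mul,
        hφsum x _ (Finset.Subset.refl _), one_mul]
    calc ‖∑ z ∈ F x (R₀ + 1), ∑ w ∈ F y (R₀ + 1), ((φ z x : ℂ) * (φ w y)) * (k z w - 1)‖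
        ≤ ε / 2 := hc ▸ hb
      _ < ε := by linarith
  exact ⟨S' + 2 * (R₀ + 1), by linarith, k', hk'cont, hk'pos, hk'supp, hk'near⟩

end Aux

/-- For a locally compact second countable group with a proper
left-invariant compatible metric `d`, property A of `(G,d)` is equivalent to all
(resp. some) uniformly locally finite metric lattice in `G` having Yu's property A. -/
theorem propertyA_iff_lattices_propertyA
    (G : Type*) [Group G] [TopologicalSpace G] [IsTopologicalGroup G]
    [LocallyCompactSpace G] [SecondCountableTopology G] [T2Space G]
    (d : G → G → ℝ) (hd : IsProperLeftInvariantCompatibleMetric G d) :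
    List.TFAE
      [PropertyAWith G d,
       ∀ Z : Set G, IsMetricLattice d Z → SubsetUniformlyLocallyFinite d Z →
         SubsetPropertyA d Z,
       ∃ Z : Set G, IsMetricLattice d Z ∧ SubsetUniformlyLocallyFinite d Z ∧
         SubsetPropertyA d Z] := by
  tfae_have 1 → 2 := fun h Z _ _ => subsetA_of_A h Z
  tfae_have 2 → 3 := by
    intro h
    obtain ⟨Z, h1, h2⟩ := exists_good_lattice hd
    exact ⟨Z, h1, h2, h Z h1 h2⟩
  tfae_have 3 → 1 := by
    rintro ⟨Z, h1, h2, h3⟩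
    exact propertyA_of_lattice hd Z h1 h2 h3
  tfae_finish
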